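/- In the linear estimator setting with a_i ≥ 0 and nonpositive pairwise covariances, if there exists a pair i ≠ j with a_i > 0, a_j > 0, and Cov(A'_i, A'_j) < 0, then the variance inequality is strict: Var(ψ_swap) < Var(ψ_indep). -/

import Mathlib

open MeasureTheory ProbabilityTheory Finset

lemma var_expand_aux {Ω : Type*} [MeasurableSpace Ω] (μ : Measure Ω) [IsProbabilityMeasure μ]
    (n : ℕ) (a p : Fin n → ℝ) (b : ℝ)
    (B : Fin n → Ω → ℝ) (hm : ∀ i, Measurable (B i))
    (h01 : ∀ i ω, B i ω = 0 ∨ B i ω = 1)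
    (hmean : ∀ i, ∫ ω, B i ω ∂μ = p i) :
    variance (fun ω => ∑ i, a i * B i ω + b) μ
      = ∑ i, ∑ j, a i * a j * ((∫ ω, B i ω * B j ω ∂μ) - p i * p j) := by
  have hble : ∀ i ω, |B i ω| ≤ 1 := by
    intro i ω; rcases h01 i ω with h | h <;> simp [h]
  have hint : ∀ i, Integrable (B i) μ := by
    intro i
    exact (memLp_top_of_bound (hm i).aestronglyMeasurable 1
      (Filter.Eventually.of_forall fun ω => by simpa using hble i ω)).integrable le_top
  have hintmul : ∀ i j, Integrable (fun ω => B i ω * B j ω) μ := by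
    intro i j
    refine (memLp_top_of_bound ((hm i).mul (hm j)).aestronglyMeasurable 1
      (Filter.Eventually.of_forall fun ω => ?_)).integrable le_top
    simp only [Real.norm_eq_abs, Pi.mul_apply, abs_mul]
    calc |B i ω| * |B j ω| ≤ 1 * 1 := by
          exact mul_le_mul (hble i ω) (hble j ω) (abs_nonneg _) zero_le_one
      _ = 1 := by ring
  set X : Ω → ℝ := fun ω => ∑ i, a i * B i ω + b with hX
  have hXm : Measurable X := by
    apply Measurable.add _ measurable_const
    exact Finset.measurable_sum _ fun i _ => (hm i).const_mul _
  have hXb : ∀ ω, ‖X ω‖ ≤ (∑ i, |a i|) + |b| := by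
    intro ω
    refine (norm_add_le _ _).trans ?_
    simp only [Real.norm_eq_abs]
    gcongr
    refine (Finset.abs_sum_le_sum_abs _ _).trans ?_
    apply Finset.sum_le_sum
    intro i _
    rw [abs_mul]
    nlinarith [hble i ω, abs_nonneg (a i)]
  have hXmem : MemLp X 2 μ :=
    (memLp_top_of_bound hXm.aestronglyMeasurable _
      (Filter.Eventually.of_forall hXb)).mono_exponent le_top
  have hEX : ∫ ω, X ω ∂μ = (∑ i, a i * p i) + b := by
    rw [hX]
    rw [integral_add (integrable_finset_sum _ fun i _ => (hint i).const_mul _)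
      (integrable_const b)]
    rw [integral_finset_sum _ fun i _ => (hint i).const_mul _]
    simp [integral_const_mul, hmean]
  have hkey : ∀ (c : Fin n → ℝ), (∑ i, c i)^2 = ∑ i, ∑ j, c i * c j := by
    intro c
    rw [sq, Finset.sum_mul_sum]
  have hEX2 : ∫ ω, X ω ^ 2 ∂μ
      = (∑ i, ∑ j, a i * a j * ∫ ω, B i ω * B j ω ∂μ) + (2 * b) * (∑ i, a i * p i) + b ^ 2 := by
    have hptw : ∀ ω, X ω ^ 2
        = (∑ i, ∑ j, (a i * a j) * (B i ω * B j ω)) + (2 * b) * (∑ i, a i * B i ω) + b ^ 2 := by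
      intro ω
      have hsq : (∑ i, a i * B i ω)^2 = ∑ i, ∑ j, (a i * a j) * (B i ω * B j ω) := by
        rw [hkey fun i => a i * B i ω]
        exact Finset.sum_congr rfl fun i _ => Finset.sum_congr rfl fun j _ =>
          mul_mul_mul_comm _ _ _ _
      rw [hX]
      simp only [add_sq, hsq]
      ring
    simp only [hptw]
    rw [integral_add, integral_add, integral_finset_sum, integral_const_mul,
      integral_finset_sum, integral_const]
    rotate_left
    · exact fun i _ => (hint i).const_mul _
    · exact fun i _ => integrable_finset_sum _ fun j _ => (hintmul i j).const_mul _
    · exact integrable_finset_sum _ fun i _ => integrable_finset_sum _ fun j _ =>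
        (hintmul i j).const_mul _
    · exact (integrable_finset_sum _ fun i _ => (hint i).const_mul _).const_mul _
    · exact (integrable_finset_sum _ fun i _ => integrable_finset_sum _ fun j _ =>
        (hintmul i j).const_mul _).add
        ((integrable_finset_sum _ fun i _ => (hint i).const_mul _).const_mul _)
    · exact integrable_const _
    simp only [integral_const_mul, hmean, measure_univ, ENNReal.toReal_one, probReal_univ, smul_eq_mul, one_mul]
    congr 1
    congr 1
    refine Finset.sum_congr rfl fun i _ => ?_
    rw [integral_finset_sum _ fun j _ => (hintmul i j).const_mul _]
    exact Finset.sum_congr rfl fun j _ => integral_const_mul _ _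
  rw [variance_eq_sub hXmem]
  simp only [Pi.pow_apply]
  rw [hEX2, hEX]
  have h2 : (∑ i, a i * p i)^2 = ∑ i, ∑ j, a i * a j * (p i * p j) := by
    rw [hkey fun i => a i * p i]
    exact Finset.sum_congr rfl fun i _ => Finset.sum_congr rfl fun j _ => by ring
  have h3 : ∑ i, ∑ j, a i * a j * ((∫ ω, B i ω * B j ω ∂μ) - p i * p j)
      = (∑ i, ∑ j, a i * a j * ∫ ω, B i ω * B j ω ∂μ) - ∑ i, ∑ j, a i * a j * (p i * p j) := by
    rw [← Finset.sum_sub_distrib]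
    refine Finset.sum_congr rfl fun i _ => ?_
    rw [← Finset.sum_sub_distrib]
    exact Finset.sum_congr rfl fun j _ => by ring
  rw [h3, ← h2]
  ring

/-- strict variance reduction for linear estimators when some pair has
positive coefficients and strictly negative covariance. -/
theorem linear_estimator_strict_variance_reduction
    {Ω : Type*} [MeasurableSpace Ω] (μ : Measure Ω) [IsProbabilityMeasure μ]
    (n : ℕ) (a p : Fin n → ℝ) (b : ℝ)
    (ha : ∀ i, 0 ≤ a i) (hp : ∀ i, p i ∈ Set.Ioo (0:ℝ) 1)
    (A' A : Fin n → Ω → ℝ)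
    (hA'm : ∀ i, Measurable (A' i)) (hAm : ∀ i, Measurable (A i))
    (hA'01 : ∀ i ω, A' i ω = 0 ∨ A' i ω = 1) (hA01 : ∀ i ω, A i ω = 0 ∨ A i ω = 1)
    (hA'mean : ∀ i, ∫ ω, A' i ω ∂μ = p i) (hAmean : ∀ i, ∫ ω, A i ω ∂μ = p i)
    (hcovle : ∀ i j, i ≠ j → ∫ ω, A' i ω * A' j ω ∂μ - p i * p j ≤ 0)
    (hIndep : iIndepFun A μ)
    (hstrict : ∃ i j, i ≠ j ∧ 0 < a i ∧ 0 < a j ∧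
      ∫ ω, A' i ω * A' j ω ∂μ - p i * p j < 0)
    (ψswap ψindep : Ω → ℝ)
    (hψswap : ∀ ω, ψswap ω = ∑ i, a i * A' i ω + b)
    (hψindep : ∀ ω, ψindep ω = ∑ i, a i * A i ω + b) :
    variance ψswap μ < variance ψindep μ := by
  have hswapeq : ψswap = fun ω => ∑ i, a i * A' i ω + b := funext hψswap
  have hindepeq : ψindep = fun ω => ∑ i, a i * A i ω + b := funext hψindep
  rw [hswapeq, hindepeq, var_expand_aux μ n a p b A' hA'm hA'01 hA'mean,
    var_expand_aux μ n a p b A hAm hA01 hAmean]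
  have hint : ∀ (B : Fin n → Ω → ℝ), (∀ i, Measurable (B i)) → (∀ i ω, B i ω = 0 ∨ B i ω = 1) →
      ∀ i, Integrable (B i) μ := by
    intro B hm h01 i
    refine (memLp_top_of_bound (hm i).aestronglyMeasurable 1
      (Filter.Eventually.of_forall fun ω => ?_)).integrable le_top
    rcases h01 i ω with h | h <;> simp [h]
  -- independent cross terms vanish
  have hAcov : ∀ i j, i ≠ j → ∫ ω, A i ω * A j ω ∂μ - p i * p j = 0 := by
    intro i j hij
    have h := (hIndep.indepFun hij).integral_mul_eq_mul_integral
      (hint A hAm hA01 i).aestronglyMeasurable (hint A hAm hA01 j).aestronglyMeasurable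
    have h2 : ∫ ω, A i ω * A j ω ∂μ = (∫ ω, A i ω ∂μ) * ∫ ω, A j ω ∂μ := h
    rw [h2, hAmean, hAmean, sub_self]
  -- diagonal terms agree
  have hdiag : ∀ (B : Fin n → Ω → ℝ), (∀ i ω, B i ω = 0 ∨ B i ω = 1) →
      (∀ i, ∫ ω, B i ω ∂μ = p i) → ∀ i, ∫ ω, B i ω * B i ω ∂μ = p i := by
    intro B h01 hmean i
    rw [← hmean i]
    refine integral_congr_ae (Filter.Eventually.of_forall fun ω => ?_)
    rcases h01 i ω with h | h <;> simp [h]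
  rw [← Finset.sum_product' (f := fun i j =>
      a i * a j * ((∫ ω, A' i ω * A' j ω ∂μ) - p i * p j)),
    ← Finset.sum_product' (f := fun i j =>
      a i * a j * ((∫ ω, A i ω * A j ω ∂μ) - p i * p j))]
  obtain ⟨i0, j0, hij0, hai0, haj0, hcov0⟩ := hstrict
  refine Finset.sum_lt_sum (fun x _ => ?_) ⟨(i0, j0), Finset.mem_product.2
    ⟨Finset.mem_univ _, Finset.mem_univ _⟩, ?_⟩
  · obtain ⟨i, j⟩ := x
    by_cases hij : i = j
    · subst hij
      rw [hdiag A' hA'01 hA'mean, hdiag A hA01 hAmean]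
    · rw [hAcov i j hij, mul_zero]
      exact mul_nonpos_of_nonneg_of_nonpos (mul_nonneg (ha i) (ha j)) (hcovle i j hij)
  · simp only
    rw [hAcov i0 j0 hij0, mul_zero]
    exact mul_neg_of_pos_of_neg (mul_pos hai0 haj0) hcov0
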